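/- arXiv:1201.5976 — 2 statements merged into one kernel-verified Lean document; each statement's English description precedes it below -/
import Mathlib

section
/- Let Θ_i := θ_i I_n for inner scalar functions θ_i (i ∈ J). Then the greatest common left inner divisor of the family {Θ_i} equals the greatest common right inner divisor and equals θ_d I_n, where θ_d = GCD{θ_i : i ∈ J}; similarly the least common left inner multiple equals the least common right inner multiple and equals θ_m I_n where θ_m = LCM{θ_i}. -/
open MeasureTheory Complex Real InnerProductSpace Submodule

set_option maxHeartbeats 1000000
set_option synthInstance.maxHeartbeats 200000

noncomputable section

namespace BlockToeplitz

instance fact2pi : Fact (0 < 2 * π) := ⟨by positivity⟩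

/-- The unit circle, as the additive circle `ℝ / 2πℤ`. -/
abbrev 𝕋 : Type := AddCircle (2 * π)

/-- Normalized Haar (Lebesgue) measure on the circle. -/
abbrev μ𝕋 : Measure 𝕋 := AddCircle.haarAddCircle

section Pointwise

variable {E F : Type*} [NormedAddCommGroup E] [NormedSpace ℂ E]
  [NormedAddCommGroup F] [NormedSpace ℂ F]

theorem memLp_pointwise {Φ : 𝕋 → (E →L[ℂ] F)} (hm : AEStronglyMeasurable Φ μ𝕋)
    {C : ℝ} (hC : ∀ x, ‖Φ x‖ ≤ C) (f : Lp E 2 μ𝕋) :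
    MemLp (fun x => Φ x (f x)) 2 μ𝕋 := by
  refine MemLp.of_le_mul (c := C) (Lp.memLp f) ?_ ?_
  · exact isBoundedBilinearMap_apply.continuous.comp_aestronglyMeasurable
      (hm.prodMk (Lp.aestronglyMeasurable f))
  · refine Filter.Eventually.of_forall fun x => ?_
    exact (ContinuousLinearMap.le_opNorm _ _).trans
      (mul_le_mul_of_nonneg_right (hC x) (norm_nonneg _))

/-- The operator on `L²` of pointwise application of a uniformly bounded family of
operators (e.g. multiplication by an `L^∞` matrix function). -/
def pointwiseCLM (Φ : 𝕋 → (E →L[ℂ] F)) (hm : AEStronglyMeasurable Φ μ𝕋)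
    {C : ℝ} (hC : ∀ x, ‖Φ x‖ ≤ C) : Lp E 2 μ𝕋 →L[ℂ] Lp F 2 μ𝕋 :=
  LinearMap.mkContinuous
    { toFun := fun f => (memLp_pointwise hm hC f).toLp _
      map_add' := fun f g => by
        rw [← MemLp.toLp_add (memLp_pointwise hm hC f) (memLp_pointwise hm hC g)]
        refine MemLp.toLp_congr _ _ ?_
        filter_upwards [Lp.coeFn_add f g] with x hx
        simp only [hx, Pi.add_apply, map_add]
      map_smul' := fun c f => by
        try dsimp only
        rw [RingHom.id_apply, ← MemLp.toLp_const_smul c (memLp_pointwise hm hC f)]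
        refine MemLp.toLp_congr _ _ ?_
        filter_upwards [Lp.coeFn_smul c f] with x hx
        simp only [hx, Pi.smul_apply, ContinuousLinearMap.map_smul] }
    (max C 0)
    (by
      intro f
      simp only [LinearMap.coe_mk, AddHom.coe_mk]
      rw [Lp.norm_toLp]
      have hb : eLpNorm (fun x => Φ x (f x)) 2 μ𝕋
          ≤ ENNReal.ofReal (max C 0) * eLpNorm (f : 𝕋 → E) 2 μ𝕋 := by
        refine eLpNorm_le_mul_eLpNorm_of_ae_le_mul ?_ 2
        refine Filter.Eventually.of_forall fun x => ?_
        exact (ContinuousLinearMap.le_opNorm _ _).trans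
          (mul_le_mul_of_nonneg_right ((hC x).trans (le_max_left _ _)) (norm_nonneg _))
      calc (eLpNorm (fun x => Φ x (f x)) 2 μ𝕋).toReal
          ≤ (ENNReal.ofReal (max C 0) * eLpNorm (f : 𝕋 → E) 2 μ𝕋).toReal := by
            refine ENNReal.toReal_mono ?_ hb
            exact ENNReal.mul_ne_top ENNReal.ofReal_ne_top (Lp.eLpNorm_ne_top f)
        _ = max C 0 * ‖f‖ := by
            rw [ENNReal.toReal_mul, ENNReal.toReal_ofReal (le_max_right C 0), Lp.norm_def])

@[simp] theorem pointwiseCLM_apply (Φ : 𝕋 → (E →L[ℂ] F)) (hm : AEStronglyMeasurable Φ μ𝕋)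
    {C : ℝ} (hC : ∀ x, ‖Φ x‖ ≤ C) (f : Lp E 2 μ𝕋) :
    pointwiseCLM Φ hm hC f = (memLp_pointwise hm hC f).toLp _ := rfl

end Pointwise

end BlockToeplitz

namespace BlockToeplitz
open scoped ComplexConjugate

variable {ι : Type} [Fintype ι]

/-- `ℂ^ι`. -/
abbrev V (ι : Type) [Fintype ι] : Type := EuclideanSpace ℂ ι

/-- The space `L²(𝕋, ℂ^ι)`. -/
abbrev L2 (ι : Type) [Fintype ι] : Type := Lp (V ι) 2 μ𝕋

/-- The vector-valued trigonometric monomial `z^k ⊗ e_i` as an element of `L²`. -/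
def fourierV (ι : Type) [Fintype ι] [DecidableEq ι] (k : ℤ) (i : ι) : L2 ι :=
  (ContinuousMap.toLp (E := V ι) 2 μ𝕋 ℂ)
    ⟨fun x => fourier k x • EuclideanSpace.single i 1,
      (map_continuous (fourier k)).smul continuous_const⟩

/-- The span of the analytic-negative monomials. -/
def negSpan (ι : Type) [Fintype ι] : Submodule ℂ (L2 ι) :=
  Submodule.span ℂ
    {f | ∃ k : ℤ, k < 0 ∧ ∃ i : ι, f = @fourierV ι _ (Classical.decEq ι) k i}

/-- The vector-valued Hardy space `H²(𝕋, ℂ^ι)`, i.e. the orthogonal complement in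
`L²` of the span of the monomials `z^k ⊗ e_i`, `k < 0`. -/
def hardy (ι : Type) [Fintype ι] : Submodule ℂ (L2 ι) := (negSpan ι)ᗮ

/-- The Hardy space as a Hilbert space. -/
abbrev H2 (ι : Type) [Fintype ι] : Type := ↥(hardy ι)

instance : CompleteSpace (H2 ι) := by
  unfold H2 hardy; infer_instance

instance : HasOrthogonalProjection (hardy ι) := by
  unfold hardy; infer_instance

/-- The orthogonal projection `P` of `L²` onto `H²`. -/
def hardyProj (ι : Type) [Fintype ι] : L2 ι →L[ℂ] H2 ι :=
  orthogonalProjection (hardy ι)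

/-- A matrix-valued `L^∞` function on the circle (the matrices being identified with the
operators on `ℂ^ι` that they induce): a bounded measurable family of operators. -/
structure Symbol (ι : Type) [Fintype ι] : Type where
  toFun : 𝕋 → (V ι →L[ℂ] V ι)
  meas : AEStronglyMeasurable toFun μ𝕋
  bound : ℝ
  le_bound : ∀ x, ‖toFun x‖ ≤ bound

instance : CoeFun (Symbol ι) (fun _ => 𝕋 → (V ι →L[ℂ] V ι)) := ⟨Symbol.toFun⟩

/-- The multiplication operator `f ↦ Φ f` on `L²(𝕋, ℂ^ι)`. -/
def Symbol.mulLp (Φ : Symbol ι) : L2 ι →L[ℂ] L2 ι :=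
  pointwiseCLM Φ.toFun Φ.meas Φ.le_bound

/-- Pointwise product (composition) of two matrix symbols. -/
def Symbol.mul (Φ Ψ : Symbol ι) : Symbol ι where
  toFun := fun x => (Φ x).comp (Ψ x)
  meas := isBoundedBilinearMap_comp.continuous.comp_aestronglyMeasurable
    (Φ.meas.prodMk Ψ.meas)
  bound := max Φ.bound 0 * max Ψ.bound 0
  le_bound := fun x => (ContinuousLinearMap.opNorm_comp_le _ _).trans <|
    mul_le_mul ((Φ.le_bound x).trans (le_max_left _ _))
      ((Ψ.le_bound x).trans (le_max_left _ _)) (norm_nonneg _) (le_max_right _ _)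

/-- The pointwise adjoint symbol `Φ*` (conjugate transpose). -/
def Symbol.star (Φ : Symbol ι) : Symbol ι where
  toFun := fun x => ContinuousLinearMap.adjoint (Φ x)
  meas := (ContinuousLinearMap.adjoint (𝕜 := ℂ) (E := V ι)
      (F := V ι)).continuous.comp_aestronglyMeasurable Φ.meas
  bound := Φ.bound
  le_bound := fun x =>
    le_trans
      (le_of_eq ((ContinuousLinearMap.adjoint (𝕜 := ℂ) (E := V ι) (F := V ι)).norm_map (Φ.toFun x)))
      (Φ.le_bound x)

end BlockToeplitz

namespace BlockToeplitz
open scoped ComplexConjugate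

theorem norm_fourier_apply (k : ℤ) (x : 𝕋) : ‖fourier k x‖ = 1 := by
  rw [fourier_apply]; exact Circle.norm_coe _

section CompNeg

variable {E : Type*} [NormedAddCommGroup E] [NormedSpace ℂ E]

/-- The composition operator `f(z) ↦ f(z̄)` (i.e. `x ↦ -x` on the additive circle)
on `L²`. -/
def compNeg (E : Type*) [NormedAddCommGroup E] [NormedSpace ℂ E] :
    Lp E 2 μ𝕋 →L[ℂ] Lp E 2 μ𝕋 :=
  LinearMap.mkContinuous
    { toFun := fun f =>
        Lp.compMeasurePreserving (E := E) (p := 2) Neg.neg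
          (Measure.measurePreserving_neg μ𝕋) f
      map_add' := fun f g => by
        exact map_add (Lp.compMeasurePreserving Neg.neg (Measure.measurePreserving_neg μ𝕋)) f g
      map_smul' := fun c f => by
        apply Lp.ext
        have h1 := Lp.coeFn_compMeasurePreserving (μ := μ𝕋) (c • f)
          (Measure.measurePreserving_neg μ𝕋)
        have h2 := Lp.coeFn_compMeasurePreserving (μ := μ𝕋) f
          (Measure.measurePreserving_neg μ𝕋)
        have h3 : ((c • f : Lp E 2 μ𝕋) : 𝕋 → E) ∘ Neg.neg
            =ᵐ[μ𝕋] ((c • (f : 𝕋 → E)) ∘ Neg.neg) :=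
          (Measure.measurePreserving_neg μ𝕋).quasiMeasurePreserving.ae_eq_comp
            (Lp.coeFn_smul c f)
        filter_upwards [h1, h3,
          Lp.coeFn_smul c (Lp.compMeasurePreserving (E := E) (p := 2) Neg.neg
            (Measure.measurePreserving_neg μ𝕋) f), h2]
          with x hx1 hx3 hx4 hx2
        rw [RingHom.id_apply, hx1, hx3, hx4]
        show c • (f : 𝕋 → E) (-x)
            = c • (Lp.compMeasurePreserving (E := E) (p := 2) Neg.neg
                (Measure.measurePreserving_neg μ𝕋) f : 𝕋 → E) x
        rw [hx2]
        rfl }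
    1
    (fun f => by
      simpa using (Lp.norm_compMeasurePreserving (E := E) (p := 2) f
        (Measure.measurePreserving_neg μ𝕋)).le)

/-- The unitary operator `J f (z) = z̄ f(z̄)` on `L²`. -/
def Jop (E : Type*) [NormedAddCommGroup E] [NormedSpace ℂ E] :
    Lp E 2 μ𝕋 →L[ℂ] Lp E 2 μ𝕋 :=
  (pointwiseCLM (fun x => (fourier (-1) x : ℂ) • (1 : E →L[ℂ] E))
      (((map_continuous (fourier (-1))).smul continuous_const).aestronglyMeasurable)
      (C := 1)
      (fun x => by
        show ‖(fourier (-1)) x • (1 : E →L[ℂ] E)‖ ≤ 1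
        rw [norm_smul ((fourier (-1)) x) (1 : E →L[ℂ] E), norm_fourier_apply, one_mul,
          ContinuousLinearMap.one_def]
        exact ContinuousLinearMap.norm_id_le)).comp (compNeg E)

end CompNeg

end BlockToeplitz

namespace BlockToeplitz
open scoped ComplexConjugate

variable {ι : Type} [Fintype ι]

/-- The pointwise transposed-conjugated-reflected symbol `Φ̃(z) := Φ(z̄)*`. -/
def Symbol.tilde (Φ : Symbol ι) : Symbol ι where
  toFun := fun x => ContinuousLinearMap.adjoint (Φ.toFun (-x))
  meas := (ContinuousLinearMap.adjoint (𝕜 := ℂ) (E := V ι)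
      (F := V ι)).continuous.comp_aestronglyMeasurable
    (Φ.meas.comp_quasiMeasurePreserving
      (Measure.measurePreserving_neg μ𝕋).quasiMeasurePreserving)
  bound := Φ.bound
  le_bound := fun x =>
    le_trans
      (le_of_eq
        ((ContinuousLinearMap.adjoint (𝕜 := ℂ) (E := V ι) (F := V ι)).norm_map (Φ.toFun (-x))))
      (Φ.le_bound (-x))

/-- A matrix symbol belongs to `H^∞` iff multiplication by it leaves the Hardy space
invariant. -/
def Symbol.MemHinf (Φ : Symbol ι) : Prop :=
  ∀ f : L2 ι, f ∈ hardy ι → Φ.mulLp f ∈ hardy ι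

/-- A matrix `H^∞` symbol is inner if `Θ(z)*Θ(z) = I` a.e. -/
def Symbol.IsInner (Φ : Symbol ι) : Prop :=
  Φ.MemHinf ∧ ∀ᵐ x ∂μ𝕋, (ContinuousLinearMap.adjoint (Φ.toFun x)).comp (Φ.toFun x) = 1

/-- The block Toeplitz operator `T_Φ = P (Φ ·)` on the vector Hardy space. -/
def toeplitz (Φ : Symbol ι) : H2 ι →L[ℂ] H2 ι :=
  (hardyProj ι).comp (Φ.mulLp.comp (hardy ι).subtypeL)

/-- The block Hankel operator `H_Φ = J P^⊥ (Φ ·)`, viewed as an operator from `H²` to `H²`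
(its image indeed lies in `H²`). -/
def hankel (Φ : Symbol ι) : H2 ι →L[ℂ] H2 ι :=
  (hardyProj ι).comp <|
    (Jop (V ι)).comp <|
      (ContinuousLinearMap.id ℂ (L2 ι) - (hardy ι).subtypeL.comp (hardyProj ι)).comp <|
        Φ.mulLp.comp (hardy ι).subtypeL

/-- The image `Θ · H²` of the Hardy space under multiplication by a symbol. -/
def Symbol.rangeH2 (Φ : Symbol ι) : Submodule ℂ (L2 ι) :=
  (hardy ι).map (Φ.mulLp : L2 ι →ₗ[ℂ] L2 ι)

/-- The model space `H(Θ) := H² ⊖ Θ H²`. -/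
def modelSpace (Θ : Symbol ι) : Submodule ℂ (L2 ι) :=
  hardy ι ⊓ (Θ.rangeH2)ᗮ

/-- A scalar-valued `L^∞` function on the circle. -/
structure SymbolS : Type where
  toFun : 𝕋 → ℂ
  meas : AEStronglyMeasurable toFun μ𝕋
  bound : ℝ
  le_bound : ∀ x, ‖toFun x‖ ≤ bound

instance : CoeFun SymbolS (fun _ => 𝕋 → ℂ) := ⟨SymbolS.toFun⟩

/-- Scalar symbols embed into matrix symbols as `φ I_n`. -/
def SymbolS.toMatrix (φ : SymbolS) (ι : Type) [Fintype ι] : Symbol ι where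
  toFun := fun x => φ.toFun x • (1 : V ι →L[ℂ] V ι)
  meas := φ.meas.smul aestronglyMeasurable_const
  bound := φ.bound
  le_bound := fun x => by
    have h0 : (0 : ℝ) ≤ φ.bound := le_trans (norm_nonneg _) (φ.le_bound 0)
    calc ‖φ.toFun x • (1 : V ι →L[ℂ] V ι)‖ ≤ ‖φ.toFun x‖ * ‖(1 : V ι →L[ℂ] V ι)‖ :=
          ContinuousLinearMap.opNorm_smul_le _ _
      _ ≤ φ.bound * 1 := by
          refine mul_le_mul (φ.le_bound x) ?_ (norm_nonneg _) h0
          rw [ContinuousLinearMap.one_def]; exact ContinuousLinearMap.norm_id_le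
      _ = φ.bound := mul_one _

/-- The scalar-valued `L²` space of the circle. -/
abbrev L2S : Type := Lp ℂ 2 μ𝕋

/-- The span of the negative trigonometric monomials. -/
def negSpanS : Submodule ℂ L2S :=
  Submodule.span ℂ {f | ∃ k : ℤ, k < 0 ∧ f = fourierLp 2 k}

/-- The scalar Hardy space `H²(𝕋)`. -/
def hardyS : Submodule ℂ L2S := negSpanSᗮ

/-- The scalar Hardy space as a Hilbert space. -/
abbrev H2S : Type := ↥hardyS

instance : CompleteSpace H2S := by unfold H2S hardyS; infer_instance

instance : HasOrthogonalProjection hardyS := by unfold hardyS; infer_instance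

/-- The Szegő (Riesz) projection `P : L² → H²`. -/
def hardyProjS : L2S →L[ℂ] H2S := orthogonalProjection hardyS

/-- Multiplication by a scalar `L^∞` function, as an operator on `L²(𝕋)`. -/
def SymbolS.mulLp (φ : SymbolS) : L2S →L[ℂ] L2S :=
  pointwiseCLM (fun x => φ.toFun x • (1 : ℂ →L[ℂ] ℂ))
    (φ.meas.smul aestronglyMeasurable_const)
    (C := φ.bound)
    (fun x => by
      calc ‖φ.toFun x • (1 : ℂ →L[ℂ] ℂ)‖ ≤ ‖φ.toFun x‖ * ‖(1 : ℂ →L[ℂ] ℂ)‖ :=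
            ContinuousLinearMap.opNorm_smul_le _ _
        _ = ‖φ.toFun x‖ := by rw [norm_one, mul_one]
        _ ≤ φ.bound := φ.le_bound x)

/-- The scalar Toeplitz operator `T_φ` on `H²`. -/
def toeplitzS (φ : SymbolS) : H2S →L[ℂ] H2S :=
  hardyProjS.comp (φ.mulLp.comp hardyS.subtypeL)

/-- The scalar Hankel operator `H_φ = J P^⊥ (φ ·)` on `H²`. -/
def hankelS (φ : SymbolS) : H2S →L[ℂ] H2S :=
  hardyProjS.comp <|
    (Jop ℂ).comp <|
      (ContinuousLinearMap.id ℂ L2S - hardyS.subtypeL.comp hardyProjS).comp <|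
        φ.mulLp.comp hardyS.subtypeL

/-- Pointwise product of scalar symbols. -/
def SymbolS.mul (φ ψ : SymbolS) : SymbolS where
  toFun := fun x => φ.toFun x * ψ.toFun x
  meas := φ.meas.mul ψ.meas
  bound := max φ.bound 0 * max ψ.bound 0
  le_bound := fun x => by
    rw [norm_mul]
    exact mul_le_mul ((φ.le_bound x).trans (le_max_left _ _))
      ((ψ.le_bound x).trans (le_max_left _ _)) (norm_nonneg _) (le_max_right _ _)

/-- The complex-conjugate symbol `φ̄`. -/
def SymbolS.conj (φ : SymbolS) : SymbolS where
  toFun := fun x => conj (φ.toFun x)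
  meas := Complex.continuous_conj.comp_aestronglyMeasurable φ.meas
  bound := φ.bound
  le_bound := fun x => le_trans (le_of_eq (RCLike.norm_conj _)) (φ.le_bound x)

/-- The reflected conjugate symbol `φ̃(z) := conj (φ(z̄))`. -/
def SymbolS.tilde (φ : SymbolS) : SymbolS where
  toFun := fun x => conj (φ.toFun (-x))
  meas := Complex.continuous_conj.comp_aestronglyMeasurable
    (φ.meas.comp_quasiMeasurePreserving
      (Measure.measurePreserving_neg μ𝕋).quasiMeasurePreserving)
  bound := φ.bound
  le_bound := fun x => le_trans (le_of_eq (RCLike.norm_conj _)) (φ.le_bound (-x))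

/-- A scalar symbol is in `H^∞` iff multiplication by it preserves `H²`. -/
def SymbolS.MemHinf (φ : SymbolS) : Prop :=
  ∀ f : L2S, f ∈ hardyS → φ.mulLp f ∈ hardyS

/-- A scalar inner function: an `H^∞` function which is unimodular a.e. on the circle. -/
def SymbolS.IsInner (φ : SymbolS) : Prop :=
  φ.MemHinf ∧ ∀ᵐ x ∂μ𝕋, ‖φ.toFun x‖ = 1

/-- The image `θ · H²` of the Hardy space under a scalar multiplication operator. -/
def SymbolS.rangeH2 (φ : SymbolS) : Submodule ℂ L2S :=
  hardyS.map (φ.mulLp : L2S →ₗ[ℂ] L2S)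

/-- The scalar model space `H(θ) = H² ⊖ θH²`. -/
def modelSpaceS (θ : SymbolS) : Submodule ℂ L2S :=
  hardyS ⊓ (θ.rangeH2)ᗮ

/-- The coordinate function `z` on the circle (i.e. `x ↦ e^{ix}`). -/
def circleCoord : 𝕋 → ℂ := fun x => fourier 1 x

/-- The symbol `z` of the unilateral shift. -/
def shiftSymbolS : SymbolS where
  toFun := circleCoord
  meas := (map_continuous (fourier 1)).aestronglyMeasurable
  bound := 1
  le_bound := fun x => le_of_eq (norm_fourier_apply 1 x)

/-- The symbol `z̄`. -/
def coshiftSymbolS : SymbolS where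
  toFun := fun x => fourier (-1) x
  meas := (map_continuous (fourier (-1))).aestronglyMeasurable
  bound := 1
  le_bound := fun x => le_of_eq (norm_fourier_apply (-1) x)

/-- An operator on a complex Hilbert space is hyponormal if its self-commutator
`[T*, T] = T*T - TT*` is a positive operator. -/
def Hyponormal {H : Type*} [NormedAddCommGroup H] [InnerProductSpace ℂ H] [CompleteSpace H]
    (T : H →L[ℂ] H) : Prop :=
  (ContinuousLinearMap.adjoint T ∘L T - T ∘L ContinuousLinearMap.adjoint T).IsPositive

/-- A Blaschke factor `b_a(z) = (z - a)/(1 - āz)`. -/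
def blaschke (a z : ℂ) : ℂ := (z - a) / (1 - conj a * z)

end BlockToeplitz

namespace BlockToeplitz

section Statement4Aux

open scoped ComplexInnerProductSpace ComplexConjugate

theorem ae_comp_neg {E : Type*} {f g : 𝕋 → E} (h : f =ᵐ[μ𝕋] g) :
    (fun x => f (-x)) =ᵐ[μ𝕋] (fun x => g (-x)) := by
  simpa [Function.comp_def] using
    (Measure.measurePreserving_neg μ𝕋).quasiMeasurePreserving.ae_eq_comp h

theorem memLp_conjNeg (f : L2S) : MemLp (fun x => conj ((f : 𝕋 → ℂ) (-x))) 2 μ𝕋 := by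
  have h1 : MemLp (fun x => (f : 𝕋 → ℂ) (-x)) 2 μ𝕋 :=
    (Lp.memLp f).comp_measurePreserving (Measure.measurePreserving_neg μ𝕋)
  refine h1.of_le_mul (c := 1)
    (Complex.continuous_conj.comp_aestronglyMeasurable h1.aestronglyMeasurable) ?_
  exact Filter.Eventually.of_forall fun x => by simp

/-- The antiunitary involution `f(z) ↦ conj (f (z̄))` on scalar `L²`. -/
def CLp (f : L2S) : L2S := (memLp_conjNeg f).toLp _

theorem CLp_coeFn (f : L2S) :
    (CLp f : 𝕋 → ℂ) =ᵐ[μ𝕋] fun x => conj ((f : 𝕋 → ℂ) (-x)) := MemLp.coeFn_toLp _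

theorem CLp_add (f g : L2S) : CLp (f + g) = CLp f + CLp g := by
  apply Lp.ext
  filter_upwards [CLp_coeFn (f + g), Lp.coeFn_add (CLp f) (CLp g), CLp_coeFn f, CLp_coeFn g,
    ae_comp_neg (Lp.coeFn_add f g)] with x h1 h2 h3 h4 h5
  simp only [h1, h2, Pi.add_apply, h3, h4]
  simp only [Pi.add_apply] at h5
  rw [h5, map_add]

theorem CLp_zero : CLp (0 : L2S) = 0 := by
  apply Lp.ext
  filter_upwards [CLp_coeFn (0 : L2S), Lp.coeFn_zero ℂ 2 μ𝕋,
    ae_comp_neg (Lp.coeFn_zero ℂ 2 μ𝕋)] with x h1 h2 h3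
  simp only [h1, h2, Pi.zero_apply] at *
  rw [h3, map_zero]

theorem CLp_smul (c : ℂ) (f : L2S) : CLp (c • f) = conj c • CLp f := by
  apply Lp.ext
  filter_upwards [CLp_coeFn (c • f), Lp.coeFn_smul (conj c) (CLp f), CLp_coeFn f,
    ae_comp_neg (Lp.coeFn_smul c f)] with x h1 h2 h3 h4
  simp only [Pi.smul_apply] at h4
  rw [h1, h2, Pi.smul_apply, h3, h4, smul_eq_mul, smul_eq_mul, map_mul]

theorem CLp_CLp (f : L2S) : CLp (CLp f) = f := by
  apply Lp.ext
  filter_upwards [CLp_coeFn (CLp f), ae_comp_neg (CLp_coeFn f)] with x h1 h2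
  rw [h1, h2, neg_neg, Complex.conj_conj]

theorem CLp_sub (f g : L2S) : CLp (f - g) = CLp f - CLp g := by
  have hneg : CLp (-g) = -CLp g := by
    have := CLp_smul (-1 : ℂ) g
    simpa using this
  rw [sub_eq_add_neg, CLp_add, hneg, sub_eq_add_neg]

theorem norm_CLp (f : L2S) : ‖CLp f‖ = ‖f‖ := by
  rw [CLp, Lp.norm_toLp]
  have h1 : eLpNorm (fun x => conj ((f : 𝕋 → ℂ) (-x))) 2 μ𝕋
      = eLpNorm (fun x => (f : 𝕋 → ℂ) (-x)) 2 μ𝕋 :=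
    eLpNorm_congr_norm_ae (Filter.Eventually.of_forall fun x => by simp)
  have h2 : eLpNorm ((f : 𝕋 → ℂ) ∘ Neg.neg) 2 μ𝕋 = eLpNorm (f : 𝕋 → ℂ) 2 μ𝕋 :=
    eLpNorm_comp_measurePreserving (Lp.aestronglyMeasurable f)
      (Measure.measurePreserving_neg μ𝕋)
  rw [h1]
  rw [show (fun x => (f : 𝕋 → ℂ) (-x)) = (f : 𝕋 → ℂ) ∘ Neg.neg from rfl, h2]
  exact (Lp.norm_def f).symm

theorem isometry_CLp : Isometry CLp :=
  Isometry.of_dist_eq fun f g => by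
    rw [dist_eq_norm, dist_eq_norm, ← CLp_sub, norm_CLp]

/-- `CLp` as an isometric equivalence. -/
def Ceq : L2S ≃ᵢ L2S :=
  { toFun := CLp
    invFun := CLp
    left_inv := CLp_CLp
    right_inv := CLp_CLp
    isometry_toFun := isometry_CLp }

theorem CLp_image_closure (s : Set L2S) : CLp '' closure s = closure (CLp '' s) :=
  Ceq.toHomeomorph.image_closure s

theorem inner_CLp (f g : L2S) : ⟪CLp f, CLp g⟫ = conj ⟪f, g⟫ := by
  rw [MeasureTheory.L2.inner_def, MeasureTheory.L2.inner_def, ← integral_conj]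
  have hneg : ∫ x, conj (⟪(f : 𝕋 → ℂ) (-x), (g : 𝕋 → ℂ) (-x)⟫ : ℂ) ∂μ𝕋
      = ∫ x, conj (⟪(f : 𝕋 → ℂ) x, (g : 𝕋 → ℂ) x⟫ : ℂ) ∂μ𝕋 := by
    exact (Measure.measurePreserving_neg μ𝕋).integral_comp
      (MeasurableEquiv.neg 𝕋).measurableEmbedding
      (fun y => conj (⟪(f : 𝕋 → ℂ) y, (g : 𝕋 → ℂ) y⟫ : ℂ))
  rw [← hneg]
  apply integral_congr_ae
  filter_upwards [CLp_coeFn f, CLp_coeFn g] with x h1 h2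
  rw [h1, h2]
  simp [RCLike.inner_apply, mul_comm]

end Statement4Aux
section Statement4Aux2

open scoped ComplexInnerProductSpace ComplexConjugate

/-- The image of a subspace of scalar `L²` under the conjugation `CLp`. -/
def cmapS (S : Submodule ℂ L2S) : Submodule ℂ L2S where
  carrier := CLp '' (S : Set L2S)
  add_mem' := by
    rintro a b ⟨f, hf, rfl⟩ ⟨g, hg, rfl⟩
    exact ⟨f + g, S.add_mem hf hg, CLp_add f g⟩
  zero_mem' := ⟨0, S.zero_mem, CLp_zero⟩
  smul_mem' := by
    rintro c a ⟨f, hf, rfl⟩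
    exact ⟨conj c • f, S.smul_mem _ hf, by rw [CLp_smul, Complex.conj_conj]⟩

theorem mem_cmapS {S : Submodule ℂ L2S} {g : L2S} : g ∈ cmapS S ↔ CLp g ∈ S := by
  constructor
  · rintro ⟨f, hf, rfl⟩; rwa [CLp_CLp]
  · intro h; exact ⟨CLp g, h, CLp_CLp g⟩

theorem cmapS_cmapS (S : Submodule ℂ L2S) : cmapS (cmapS S) = S := by
  ext g; rw [mem_cmapS, mem_cmapS, CLp_CLp]

theorem cmapS_mono {S T : Submodule ℂ L2S} (h : S ≤ T) : cmapS S ≤ cmapS T := by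
  intro g hg; rw [mem_cmapS] at hg ⊢; exact h hg

theorem cmapS_iInf {J : Type*} (S : J → Submodule ℂ L2S) :
    cmapS (⨅ j, S j) = ⨅ j, cmapS (S j) := by
  ext g; simp only [mem_cmapS, Submodule.mem_iInf]

theorem cmapS_iSup {J : Type*} (S : J → Submodule ℂ L2S) :
    cmapS (⨆ j, S j) = ⨆ j, cmapS (S j) := by
  apply le_antisymm
  · intro g hg
    rw [mem_cmapS] at hg
    have h1 : (⨆ j, S j) ≤ cmapS (⨆ j, cmapS (S j)) := by
      apply iSup_le; intro j
      intro x hx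
      rw [mem_cmapS]
      exact le_iSup (fun j => cmapS (S j)) j (mem_cmapS.2 (by rwa [CLp_CLp]))
    have h2 := h1 hg
    rw [mem_cmapS, CLp_CLp] at h2
    exact h2
  · apply iSup_le; intro j; exact cmapS_mono (le_iSup _ j)

theorem cmapS_orthogonal_le (S : Submodule ℂ L2S) : cmapS Sᗮ ≤ (cmapS S)ᗮ := by
  intro g hg
  rw [mem_cmapS] at hg
  rw [Submodule.mem_orthogonal]
  rintro u ⟨v, hv, rfl⟩
  have h1 : ⟪CLp v, g⟫ = conj ⟪v, CLp g⟫ := by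
    conv_lhs => rw [← CLp_CLp g]
    exact inner_CLp v (CLp g)
  rw [h1, (Submodule.mem_orthogonal _ _).1 hg v hv, map_zero]

theorem cmapS_orthogonal (S : Submodule ℂ L2S) : cmapS Sᗮ = (cmapS S)ᗮ := by
  refine le_antisymm (cmapS_orthogonal_le S) ?_
  have h2 : cmapS (cmapS S)ᗮ ≤ Sᗮ := by
    have := cmapS_orthogonal_le (cmapS S)
    rwa [cmapS_cmapS] at this
  have h3 := cmapS_mono h2
  rwa [cmapS_cmapS] at h3

theorem cmapS_closure (S : Submodule ℂ L2S) :
    cmapS S.topologicalClosure = (cmapS S).topologicalClosure := by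
  apply SetLike.ext'
  show CLp '' (S.topologicalClosure : Set L2S) = _
  rw [Submodule.topologicalClosure_coe, Submodule.topologicalClosure_coe, CLp_image_closure]
  rfl

theorem CLp_fourierLp (k : ℤ) : CLp (fourierLp 2 k) = fourierLp 2 k := by
  apply Lp.ext
  filter_upwards [CLp_coeFn (fourierLp 2 k), coeFn_fourierLp 2 k,
    ae_comp_neg (coeFn_fourierLp 2 k)] with x h1 h2 h3
  rw [h1, h3, h2, ← fourier_neg]
  rw [fourier_apply, fourier_apply]
  congr 1
  rw [smul_neg, neg_smul, neg_neg]

theorem cmapS_negSpanS : cmapS negSpanS = negSpanS := by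
  have h : negSpanS ≤ cmapS negSpanS := by
    refine Submodule.span_le.2 ?_
    rintro f ⟨k, hk, rfl⟩
    rw [SetLike.mem_coe, mem_cmapS, CLp_fourierLp]
    exact Submodule.subset_span ⟨k, hk, rfl⟩
  refine le_antisymm ?_ h
  have := cmapS_mono h
  rwa [cmapS_cmapS] at this

theorem cmapS_hardyS : cmapS hardyS = hardyS := by
  rw [show hardyS = negSpanSᗮ from rfl, cmapS_orthogonal, cmapS_negSpanS]

theorem CLp_mem_hardyS {f : L2S} : CLp f ∈ hardyS ↔ f ∈ hardyS := by
  constructor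
  · intro h
    have : f ∈ cmapS hardyS := mem_cmapS.2 h
    rwa [cmapS_hardyS] at this
  · intro h
    exact mem_cmapS.1 (by rwa [cmapS_hardyS])

theorem SymbolS.mulLp_coeFn (φ : SymbolS) (f : L2S) :
    (φ.mulLp f : 𝕋 → ℂ) =ᵐ[μ𝕋] fun x => φ.toFun x * (f : 𝕋 → ℂ) x := by
  unfold SymbolS.mulLp
  rw [pointwiseCLM_apply]
  refine (MemLp.coeFn_toLp _).trans ?_
  exact Filter.Eventually.of_forall fun x => by simp

theorem CLp_mulLp (φ : SymbolS) (f : L2S) : CLp (φ.mulLp f) = φ.tilde.mulLp (CLp f) := by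
  apply Lp.ext
  filter_upwards [CLp_coeFn (φ.mulLp f), ae_comp_neg (φ.mulLp_coeFn f),
    φ.tilde.mulLp_coeFn (CLp f), CLp_coeFn f] with x h1 h2 h3 h4
  rw [h1, h2, h3, h4]
  show conj (φ.toFun (-x) * (f : 𝕋 → ℂ) (-x)) = conj (φ.toFun (-x)) * conj ((f : 𝕋 → ℂ) (-x))
  rw [map_mul]

theorem mem_rangeH2S {φ : SymbolS} {g : L2S} :
    g ∈ φ.rangeH2 ↔ ∃ f ∈ hardyS, φ.mulLp f = g := by
  simp [SymbolS.rangeH2, Submodule.mem_map]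

theorem cmapS_rangeH2 (φ : SymbolS) : cmapS φ.rangeH2 = φ.tilde.rangeH2 := by
  ext g
  rw [mem_cmapS, mem_rangeH2S, mem_rangeH2S]
  constructor
  · rintro ⟨f, hf, hfg⟩
    refine ⟨CLp f, CLp_mem_hardyS.2 hf, ?_⟩
    rw [← CLp_mulLp, hfg, CLp_CLp]
  · rintro ⟨h, hh, hhg⟩
    refine ⟨CLp h, CLp_mem_hardyS.2 hh, ?_⟩
    have h5 := CLp_mulLp φ (CLp h)
    rw [CLp_CLp, hhg] at h5
    rw [← h5, CLp_CLp]

end Statement4Aux2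
section Statement4Aux3

open scoped ComplexInnerProductSpace ComplexConjugate

variable {ι : Type} [Fintype ι] [DecidableEq ι]

theorem pointwiseCLM_coeFn {E F : Type*} [NormedAddCommGroup E] [NormedSpace ℂ E]
    [NormedAddCommGroup F] [NormedSpace ℂ F] (Φ : 𝕋 → (E →L[ℂ] F))
    (hm : AEStronglyMeasurable Φ μ𝕋) {C : ℝ} (hC : ∀ x, ‖Φ x‖ ≤ C) (f : Lp E 2 μ𝕋) :
    (pointwiseCLM Φ hm hC f : 𝕋 → F) =ᵐ[μ𝕋] fun x => Φ x (f x) := by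
  rw [pointwiseCLM_apply]
  exact MemLp.coeFn_toLp _

/-- Coordinate evaluation on vector-valued `L²`. -/
def Eop (i : ι) : L2 ι →L[ℂ] L2S :=
  pointwiseCLM (fun _ => EuclideanSpace.proj (𝕜 := ℂ) i) aestronglyMeasurable_const
    (C := ‖(EuclideanSpace.proj (𝕜 := ℂ) i : V ι →L[ℂ] ℂ)‖) (fun _ => le_rfl)

theorem Eop_coeFn (i : ι) (f : L2 ι) :
    (Eop i f : 𝕋 → ℂ) =ᵐ[μ𝕋] fun x => (f : 𝕋 → V ι) x i := pointwiseCLM_coeFn _ _ _ f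

/-- The linear embedding `c ↦ c • e_i` of `ℂ` into `ℂ^ι`. -/
def singleCLM (i : ι) : ℂ →L[ℂ] V ι :=
  (ContinuousLinearMap.id ℂ ℂ).smulRight (EuclideanSpace.single i 1)

/-- Coordinate embedding on `L²`. -/
def Sop (i : ι) : L2S →L[ℂ] L2 ι :=
  pointwiseCLM (fun _ => singleCLM i) aestronglyMeasurable_const
    (C := ‖singleCLM (ι := ι) i‖) (fun _ => le_rfl)

theorem Sop_coeFn (i : ι) (g : L2S) :
    (Sop i g : 𝕋 → V ι) =ᵐ[μ𝕋] fun x => singleCLM i ((g : 𝕋 → ℂ) x) :=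
  pointwiseCLM_coeFn _ _ _ g

theorem singleCLM_apply (i : ι) (c : ℂ) :
    singleCLM i c = c • EuclideanSpace.single i (1 : ℂ) := rfl

theorem V_sum_apply {α : Type*} (s : Finset α) (w : α → V ι) (j : ι) :
    (∑ a ∈ s, w a) j = ∑ a ∈ s, w a j := by
  classical
  induction s using Finset.induction_on with
  | empty => rfl
  | @insert a s hnot ih => rw [Finset.sum_insert hnot, Finset.sum_insert hnot, ← ih]; rfl

theorem sum_singleCLM (v : V ι) : ∑ i, singleCLM (ι := ι) i (v i) = v := by
  ext j
  rw [V_sum_apply]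
  have h2 : ∀ i, (singleCLM (ι := ι) i (v i)) j = if j = i then v i else 0 := by
    intro i
    rw [singleCLM_apply]
    have h3 : (v i • EuclideanSpace.single i (1 : ℂ)) j
        = v i * (EuclideanSpace.single i (1 : ℂ)) j := rfl
    rw [h3, EuclideanSpace.single_apply]
    simp [mul_ite]
  simp_rw [h2]
  simp

theorem Lp_coeFn_sum {E : Type*} [NormedAddCommGroup E] {α : Type*} (s : Finset α)
    (f : α → Lp E 2 μ𝕋) :
    ((∑ a ∈ s, f a : Lp E 2 μ𝕋) : 𝕋 → E) =ᵐ[μ𝕋] fun x => ∑ a ∈ s, (f a : 𝕋 → E) x := by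
  classical
  induction s using Finset.induction_on with
  | empty =>
      simp only [Finset.sum_empty]
      filter_upwards [Lp.coeFn_zero E 2 μ𝕋] with x hx using hx
  | @insert a t hnot ih =>
      rw [Finset.sum_insert hnot]
      filter_upwards [Lp.coeFn_add (f a) (∑ b ∈ t, f b), ih] with x hx hx2
      rw [hx]
      simp only [Pi.add_apply, hx2, Finset.sum_insert hnot]

theorem sum_Sop_Eop (f : L2 ι) : ∑ i, Sop i (Eop i f) = f := by
  apply Lp.ext
  have h2 : ∀ᵐ x ∂μ𝕋, ∀ i : ι,
      (Sop i (Eop i f) : 𝕋 → V ι) x = singleCLM i ((f : 𝕋 → V ι) x i) := by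
    rw [MeasureTheory.ae_all_iff]
    intro i
    filter_upwards [Sop_coeFn i (Eop i f), Eop_coeFn i f] with x hx1 hx2
    rw [hx1, hx2]
  filter_upwards [Lp_coeFn_sum Finset.univ (fun i => Sop i (Eop i f)), h2] with x hx1 hx2
  rw [hx1]
  calc ∑ i, (Sop i (Eop i f) : 𝕋 → V ι) x = ∑ i, singleCLM i ((f : 𝕋 → V ι) x i) :=
        Finset.sum_congr rfl fun i _ => hx2 i
    _ = (f : 𝕋 → V ι) x := sum_singleCLM _

theorem Eop_Sop_same (i : ι) (g : L2S) : Eop i (Sop i g) = g := by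
  apply Lp.ext
  filter_upwards [Eop_coeFn i (Sop i g), Sop_coeFn i g] with x hx1 hx2
  rw [hx1, hx2, singleCLM_apply]
  have h3 : (((g : 𝕋 → ℂ) x) • EuclideanSpace.single i (1 : ℂ)) i
      = (g : 𝕋 → ℂ) x * (EuclideanSpace.single i (1 : ℂ)) i := rfl
  rw [h3, EuclideanSpace.single_apply]
  simp

theorem Eop_Sop_ne {k i : ι} (h : k ≠ i) (g : L2S) : Eop k (Sop i g) = 0 := by
  apply Lp.ext
  filter_upwards [Eop_coeFn k (Sop i g), Sop_coeFn i g, Lp.coeFn_zero ℂ 2 μ𝕋]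
    with x hx1 hx2 hx3
  rw [hx1, hx2, hx3, singleCLM_apply]
  have h3 : (((g : 𝕋 → ℂ) x) • EuclideanSpace.single i (1 : ℂ)) k
      = (g : 𝕋 → ℂ) x * (EuclideanSpace.single i (1 : ℂ)) k := rfl
  rw [h3, EuclideanSpace.single_apply, if_neg h]
  simp

theorem Symbol.mulLp_coeFn (Φ : Symbol ι) (f : L2 ι) :
    (Φ.mulLp f : 𝕋 → V ι) =ᵐ[μ𝕋] fun x => Φ.toFun x ((f : 𝕋 → V ι) x) := by
  unfold Symbol.mulLp
  exact pointwiseCLM_coeFn _ _ _ f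

theorem Eop_mulLp (φ : SymbolS) (i : ι) (f : L2 ι) :
    Eop i ((φ.toMatrix ι).mulLp f) = φ.mulLp (Eop i f) := by
  apply Lp.ext
  filter_upwards [Eop_coeFn i ((φ.toMatrix ι).mulLp f), Symbol.mulLp_coeFn (φ.toMatrix ι) f,
    φ.mulLp_coeFn (Eop i f), Eop_coeFn i f] with x h1 h2 h3 h4
  rw [h1, h2, h3, h4]
  show ((φ.toFun x • (1 : V ι →L[ℂ] V ι)) ((f : 𝕋 → V ι) x)) i
      = φ.toFun x * (f : 𝕋 → V ι) x i
  rfl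

theorem Sop_mulLp (φ : SymbolS) (i : ι) (g : L2S) :
    Sop i (φ.mulLp g) = (φ.toMatrix ι).mulLp (Sop i g) := by
  apply Lp.ext
  filter_upwards [Sop_coeFn i (φ.mulLp g), φ.mulLp_coeFn g,
    Symbol.mulLp_coeFn (φ.toMatrix ι) (Sop i g), Sop_coeFn i g] with x h1 h2 h3 h4
  rw [h1, h2, h3, h4]
  show singleCLM i (φ.toFun x * (g : 𝕋 → ℂ) x)
      = (φ.toFun x • (1 : V ι →L[ℂ] V ι)) (singleCLM i ((g : 𝕋 → ℂ) x))
  rw [singleCLM_apply, singleCLM_apply]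
  show (φ.toFun x * (g : 𝕋 → ℂ) x) • (EuclideanSpace.single i (1 : ℂ) : V ι)
      = φ.toFun x • ((g : 𝕋 → ℂ) x • (EuclideanSpace.single i (1 : ℂ) : V ι))
  rw [smul_smul]

theorem mem_span_orthogonal {H : Type*} [NormedAddCommGroup H] [InnerProductSpace ℂ H]
    (s : Set H) (f : H) : f ∈ (Submodule.span ℂ s)ᗮ ↔ ∀ v ∈ s, ⟪f, v⟫ = 0 := by
  rw [Submodule.mem_orthogonal']
  constructor
  · intro h v hv; exact h v (Submodule.subset_span hv)
  · intro h v hv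
    have hle : Submodule.span ℂ s ≤ LinearMap.ker (innerSL ℂ f) :=
      Submodule.span_le.2 fun w hw => by
        change innerSL ℂ f w = 0
        rw [innerSL_apply_apply]
        exact h w hw
    have := hle hv
    change innerSL ℂ f v = 0 at this
    rwa [innerSL_apply_apply] at this

theorem mem_hardyS_iff {g : L2S} :
    g ∈ hardyS ↔ ∀ k : ℤ, k < 0 → ⟪g, (fourierLp 2 k : L2S)⟫ = 0 := by
  have h1 : g ∈ hardyS ↔ ∀ v ∈ {f : L2S | ∃ k : ℤ, k < 0 ∧ f = fourierLp 2 k}, ⟪g, v⟫ = 0 :=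
    mem_span_orthogonal _ g
  rw [h1]
  constructor
  · intro h k hk; exact h _ ⟨k, hk, rfl⟩
  · rintro h v ⟨k, hk, rfl⟩; exact h k hk

theorem single_decEq (i : ι) :
    @EuclideanSpace.single ι ℂ _ (Classical.decEq ι) i (1 : ℂ) = EuclideanSpace.single i 1 := by
  ext j
  rw [@EuclideanSpace.single_apply ι ℂ _ (Classical.decEq ι) i 1 j,
    EuclideanSpace.single_apply]
  by_cases h : j = i <;> simp [h]

theorem inner_fourierV (f : L2 ι) (k : ℤ) (i : ι) :
    ⟪f, (@fourierV ι _ (Classical.decEq ι) k i : L2 ι)⟫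
      = ⟪Eop i f, (fourierLp 2 k : L2S)⟫ := by
  rw [MeasureTheory.L2.inner_def, MeasureTheory.L2.inner_def]
  apply integral_congr_ae
  have hV : ((@fourierV ι _ (Classical.decEq ι) k i : L2 ι) : 𝕋 → V ι) =ᵐ[μ𝕋]
      fun x => fourier k x • @EuclideanSpace.single ι ℂ _ (Classical.decEq ι) i 1 := by
    unfold fourierV
    exact ContinuousMap.coeFn_toLp (p := 2) (μ := μ𝕋) (𝕜 := ℂ) _
  filter_upwards [hV, Eop_coeFn i f, coeFn_fourierLp 2 k] with x h1 h2 h3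
  rw [h1, h2, h3, single_decEq, inner_smul_right, EuclideanSpace.inner_single_right]
  simp only [RCLike.inner_apply, map_one, one_mul]

theorem mem_hardy_iff {f : L2 ι} : f ∈ hardy ι ↔ ∀ i, Eop i f ∈ hardyS := by
  have h1 : f ∈ hardy ι ↔ ∀ v ∈ {g : L2 ι |
      ∃ k : ℤ, k < 0 ∧ ∃ i : ι, g = @fourierV ι _ (Classical.decEq ι) k i}, ⟪f, v⟫ = 0 :=
    mem_span_orthogonal _ f
  rw [h1]
  constructor
  · intro h i
    rw [mem_hardyS_iff]
    intro k hk
    rw [← inner_fourierV]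
    exact h _ ⟨k, hk, i, rfl⟩
  · rintro h v ⟨k, hk, i, rfl⟩
    rw [inner_fourierV]
    exact mem_hardyS_iff.1 (h i) k hk

end Statement4Aux3
section Statement4Aux4

open scoped ComplexInnerProductSpace ComplexConjugate

variable {ι : Type} [Fintype ι] [DecidableEq ι]

/-- The submodule of vector `L²` functions all of whose coordinates lie in `T`. -/
def Mop (ι : Type) [Fintype ι] [DecidableEq ι] (T : Submodule ℂ L2S) :
    Submodule ℂ (L2 ι) :=
  ⨅ i : ι, T.comap (Eop i : L2 ι →ₗ[ℂ] L2S)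

theorem mem_Mop {T : Submodule ℂ L2S} {f : L2 ι} : f ∈ Mop ι T ↔ ∀ i, Eop i f ∈ T := by
  simp [Mop, Submodule.mem_iInf]

theorem Mop_mono {S T : Submodule ℂ L2S} (h : S ≤ T) : Mop ι S ≤ Mop ι T := by
  intro f hf
  rw [mem_Mop] at hf ⊢
  exact fun i => h (hf i)

theorem Mop_iInf {J : Type*} (S : J → Submodule ℂ L2S) :
    Mop ι (⨅ j, S j) = ⨅ j, Mop ι (S j) := by
  ext f
  simp only [mem_Mop, Submodule.mem_iInf]
  exact forall_comm

theorem Sop_mem_Mop {T : Submodule ℂ L2S} {g : L2S} (hg : g ∈ T) (i : ι) :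
    Sop i g ∈ Mop ι T := by
  rw [mem_Mop]
  intro k
  by_cases hki : k = i
  · subst hki; rw [Eop_Sop_same]; exact hg
  · rw [Eop_Sop_ne hki]; exact T.zero_mem

theorem Mop_isClosed {T : Submodule ℂ L2S} (hT : IsClosed (T : Set L2S)) :
    IsClosed ((Mop ι T : Submodule ℂ (L2 ι)) : Set (L2 ι)) := by
  have h : ((Mop ι T : Submodule ℂ (L2 ι)) : Set (L2 ι))
      = ⋂ i : ι, (Eop i) ⁻¹' (T : Set L2S) := by
    ext f
    simp only [SetLike.mem_coe, mem_Mop, Set.mem_iInter, Set.mem_preimage]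
  rw [h]
  exact isClosed_iInter fun i => hT.preimage (Eop i).continuous

theorem rangeH2_toMatrix (φ : SymbolS) : (φ.toMatrix ι).rangeH2 = Mop ι φ.rangeH2 := by
  ext f
  rw [mem_Mop]
  constructor
  · intro hf
    have h : ∃ g ∈ hardy ι, (φ.toMatrix ι).mulLp g = f := by
      simpa [Symbol.rangeH2, Submodule.mem_map] using hf
    obtain ⟨g, hg, rfl⟩ := h
    intro i
    rw [Eop_mulLp]
    exact mem_rangeH2S.2 ⟨Eop i g, mem_hardy_iff.1 hg i, rfl⟩
  · intro h
    choose g hg hgf using fun i => mem_rangeH2S.1 (h i)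
    have hmem : (∑ i, Sop i (g i)) ∈ hardy ι := by
      rw [mem_hardy_iff]
      intro k
      rw [map_sum]
      apply Submodule.sum_mem
      intro i _
      by_cases hki : k = i
      · subst hki; rw [Eop_Sop_same]; exact hg k
      · rw [Eop_Sop_ne hki]; exact hardyS.zero_mem
    have heq : (φ.toMatrix ι).mulLp (∑ i, Sop i (g i)) = f := by
      rw [map_sum]
      rw [Finset.sum_congr rfl (fun i _ => by rw [← Sop_mulLp, hgf i]), sum_Sop_Eop]
    have : ∃ g' ∈ hardy ι, (φ.toMatrix ι).mulLp g' = f := ⟨_, hmem, heq⟩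
    simpa [Symbol.rangeH2, Submodule.mem_map] using this

theorem Mop_iSup_closure {J : Type*} (S : J → Submodule ℂ L2S) :
    Mop ι ((⨆ j, S j).topologicalClosure) = (⨆ j, Mop ι (S j)).topologicalClosure := by
  apply le_antisymm
  · intro f hf
    rw [mem_Mop] at hf
    have hsum : f = ∑ i, Sop i (Eop i f) := (sum_Sop_Eop f).symm
    rw [hsum]
    apply Submodule.sum_mem
    intro i _
    have h1 : Eop i f ∈ closure ((⨆ j, S j : Submodule ℂ L2S) : Set L2S) := by
      have := hf i
      rwa [← SetLike.mem_coe, Submodule.topologicalClosure_coe] at this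
    have h2 : Sop i (Eop i f)
        ∈ closure ((Sop i) '' ((⨆ j, S j : Submodule ℂ L2S) : Set L2S)) :=
      image_closure_subset_closure_image (Sop i).continuous ⟨_, h1, rfl⟩
    have h3 : (Sop i) '' ((⨆ j, S j : Submodule ℂ L2S) : Set L2S)
        ⊆ ((⨆ j, Mop ι (S j) : Submodule ℂ (L2 ι)) : Set (L2 ι)) := by
      rintro _ ⟨g, hg, rfl⟩
      have hmap : Sop i g ∈ Submodule.map (Sop i : L2S →ₗ[ℂ] L2 ι) (⨆ j, S j) :=
        Submodule.mem_map_of_mem hg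
      rw [Submodule.map_iSup] at hmap
      have hle : (⨆ j, Submodule.map (Sop i : L2S →ₗ[ℂ] L2 ι) (S j))
          ≤ ⨆ j, Mop ι (S j) := by
        refine iSup_mono fun j => ?_
        rintro _ ⟨g', hg', rfl⟩
        exact Sop_mem_Mop hg' i
      exact hle hmap
    have h4 := closure_mono h3 h2
    rwa [← Submodule.topologicalClosure_coe, SetLike.mem_coe] at h4
  · refine Submodule.topologicalClosure_minimal _ ?_ (Mop_isClosed
      (Submodule.isClosed_topologicalClosure _))
    apply iSup_le
    intro j
    exact Mop_mono ((le_iSup S j).trans (Submodule.le_topologicalClosure _))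

end Statement4Aux4
/-- Lemma 2.1. Let `Θ_i := θ_i I_n` for scalar inner functions `θ_i`.
If `θ_d` is a GCD of the `θ_i` (i.e. `θ_d H² = ⋁_i θ_i H²`) then `θ_d I_n` is both the
greatest common left inner divisor and the greatest common right inner divisor of the
family `{Θ_i}` (the right version being expressed through the reflected symbols `θ̃`);
similarly, if `θ_m` is an LCM of the `θ_i` (i.e. `θ_m H² = ⋂_i θ_i H²`) then `θ_m I_n` is
both the least common left inner multiple and the least common right inner multiple. -/
theorem statement4 (ι : Type) [Fintype ι] {J : Type*} (θ : J → SymbolS)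
    (hθ : ∀ i, (θ i).IsInner) (θd θm : SymbolS) (hθd : θd.IsInner) (hθm : θm.IsInner)
    (hGCD : θd.rangeH2 = (⨆ i, (θ i).rangeH2).topologicalClosure)
    (hLCM : θm.rangeH2 = ⨅ i, (θ i).rangeH2) :
    ((θd.toMatrix ι).rangeH2
        = (⨆ i, ((θ i).toMatrix ι).rangeH2).topologicalClosure ∧
      (θd.tilde.toMatrix ι).rangeH2
        = (⨆ i, ((θ i).tilde.toMatrix ι).rangeH2).topologicalClosure) ∧
    ((θm.toMatrix ι).rangeH2 = ⨅ i, ((θ i).toMatrix ι).rangeH2 ∧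
      (θm.tilde.toMatrix ι).rangeH2 = ⨅ i, ((θ i).tilde.toMatrix ι).rangeH2) := by
  classical
  have hGCD' : θd.tilde.rangeH2 = (⨆ i, (θ i).tilde.rangeH2).topologicalClosure := by
    rw [← cmapS_rangeH2, hGCD, cmapS_closure, cmapS_iSup]
    simp only [cmapS_rangeH2]
  have hLCM' : θm.tilde.rangeH2 = ⨅ i, (θ i).tilde.rangeH2 := by
    rw [← cmapS_rangeH2, hLCM, cmapS_iInf]
    simp only [cmapS_rangeH2]
  refine ⟨⟨?_, ?_⟩, ?_, ?_⟩
  · rw [rangeH2_toMatrix, hGCD, Mop_iSup_closure]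
    simp only [← rangeH2_toMatrix]
  · rw [rangeH2_toMatrix, hGCD', Mop_iSup_closure]
    simp only [← rangeH2_toMatrix]
  · rw [rangeH2_toMatrix, hLCM, Mop_iInf]
    simp only [← rangeH2_toMatrix]
  · rw [rangeH2_toMatrix, hLCM', Mop_iInf]
    simp only [← rangeH2_toMatrix]

end BlockToeplitz
end
end

section
/- If S, T are bounded operators on a Hilbert space and S is injective, then the reduced minimum modulus satisfies γ(ST) ≥ γ(S)γ(T). -/
open MeasureTheory Complex Real InnerProductSpace Submodule

set_option maxHeartbeats 1000000
set_option synthInstance.maxHeartbeats 200000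

noncomputable section

namespace BlockToeplitz

open Classical in
/-- The reduced minimum modulus of a bounded operator. -/
def redMinModulus {H K : Type*} [NormedAddCommGroup H] [InnerProductSpace ℂ H]
    [NormedAddCommGroup K] [InnerProductSpace ℂ K] (T : H →L[ℂ] K) : ℝ :=
  if T = 0 then 0
  else sInf {r : ℝ | ∃ x : H, x ∈ (LinearMap.ker (T : H →ₗ[ℂ] K))ᗮ ∧ ‖x‖ = 1 ∧ r = ‖T x‖}

/-- **Statement 12.** If `S, T` are bounded operators on a Hilbert space and `S` is
injective, then `γ(ST) ≥ γ(S)γ(T)`. -/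
theorem statement12 {H : Type*} [NormedAddCommGroup H] [InnerProductSpace ℂ H]
    [CompleteSpace H] (S T : H →L[ℂ] H) (hS : Function.Injective S) :
    redMinModulus S * redMinModulus T ≤ redMinModulus (S.comp T) := by
  by_cases hST : S.comp T = 0
  · have hT : T = 0 := by
      ext x
      have h1 : S (T x) = 0 := congrFun (congrArg DFunLike.coe hST) x
      simpa using hS (by simpa using h1)
    simp [redMinModulus, hST, hT]
  have hT : T ≠ 0 := fun h => hST (by rw [h]; ext x; simp)
  have hSne : S ≠ 0 := fun h => hST (by rw [h]; ext x; simp)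
  -- sets
  set AS := {r : ℝ | ∃ x : H, x ∈ (LinearMap.ker (S : H →ₗ[ℂ] H))ᗮ ∧ ‖x‖ = 1 ∧ r = ‖S x‖} with hAS
  set AT := {r : ℝ | ∃ x : H, x ∈ (LinearMap.ker (T : H →ₗ[ℂ] H))ᗮ ∧ ‖x‖ = 1 ∧ r = ‖T x‖} with hAT
  have hγS : redMinModulus S = sInf AS := by rw [redMinModulus, if_neg hSne]
  have hγT : redMinModulus T = sInf AT := by rw [redMinModulus, if_neg hT]
  have bddS : BddBelow AS := ⟨0, fun r ⟨x, _, _, hr⟩ => hr ▸ norm_nonneg _⟩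
  have bddT : BddBelow AT := ⟨0, fun r ⟨x, _, _, hr⟩ => hr ▸ norm_nonneg _⟩
  have hγS0 : 0 ≤ sInf AS := Real.sInf_nonneg (fun r ⟨x, _, _, hr⟩ => hr ▸ norm_nonneg _)
  have hγT0 : 0 ≤ sInf AT := Real.sInf_nonneg (fun r ⟨x, _, _, hr⟩ => hr ▸ norm_nonneg _)
  -- ker (S∘T) = ker T
  have hker : LinearMap.ker ((S.comp T) : H →ₗ[ℂ] H) = LinearMap.ker (T : H →ₗ[ℂ] H) := by
    ext x
    simp only [LinearMap.mem_ker, ContinuousLinearMap.coe_comp', Function.comp_apply,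
      ContinuousLinearMap.coe_coe]
    constructor
    · intro h; exact hS (by simpa using h)
    · intro h; simp [h]
  -- key: γ(S) * ‖y‖ ≤ ‖S y‖
  have hkerS : (LinearMap.ker (S : H →ₗ[ℂ] H))ᗮ = ⊤ := by
    have : LinearMap.ker (S : H →ₗ[ℂ] H) = ⊥ := LinearMap.ker_eq_bot.mpr hS
    rw [this, Submodule.bot_orthogonal_eq_top]
  have key : ∀ y : H, sInf AS * ‖y‖ ≤ ‖S y‖ := by
    intro y
    rcases eq_or_ne y 0 with rfl | hy
    · simp
    · have hny : (0:ℝ) < ‖y‖ := norm_pos_iff.mpr hy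
      have hmem : ‖S (‖y‖⁻¹ • y)‖ ∈ AS := by
        refine ⟨‖y‖⁻¹ • y, by simp [hkerS], ?_, rfl⟩
        rw [norm_smul, norm_inv, norm_norm, inv_mul_cancel₀ hny.ne']
      have := csInf_le bddS hmem
      rw [S.map_smul_of_tower, norm_smul, norm_inv, norm_norm] at this
      calc sInf AS * ‖y‖ ≤ ‖y‖⁻¹ * ‖S y‖ * ‖y‖ := by
            exact mul_le_mul_of_nonneg_right this hny.le
        _ = ‖S y‖ := by field_simp
  rw [hγS, hγT, redMinModulus, if_neg hST]
  -- nonempty of the ST set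
  have : CompleteSpace ↥(LinearMap.ker (T : H →ₗ[ℂ] H)) := T.isClosed_ker.completeSpace_coe
  have hne : ∃ x : H, x ∈ (LinearMap.ker (T : H →ₗ[ℂ] H))ᗮ ∧ ‖x‖ = 1 := by
    have h1 : (LinearMap.ker (T : H →ₗ[ℂ] H))ᗮ ≠ ⊥ := by
      intro h
      exact hT (ContinuousLinearMap.ext fun x => by
        have : x ∈ LinearMap.ker (T : H →ₗ[ℂ] H) := (Submodule.orthogonal_eq_bot_iff.mp h) ▸ Submodule.mem_top
        simpa using this)
    obtain ⟨x, hx, hx0⟩ := Submodule.exists_mem_ne_zero_of_ne_bot h1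
    have hnx : (0:ℝ) < ‖x‖ := norm_pos_iff.mpr hx0
    exact ⟨‖x‖⁻¹ • x, Submodule.smul_mem _ _ hx,
      by rw [norm_smul, norm_inv, norm_norm, inv_mul_cancel₀ hnx.ne']⟩
  obtain ⟨x0, hx0, hx0n⟩ := hne
  refine le_csInf ⟨‖(S.comp T) x0‖, x0, hker ▸ hx0, hx0n, rfl⟩ ?_
  rintro r ⟨x, hx, hxn, rfl⟩
  rw [hker] at hx
  have h1 : sInf AT ≤ ‖T x‖ := csInf_le bddT ⟨x, hx, hxn, rfl⟩
  calc sInf AS * sInf AT ≤ sInf AS * ‖T x‖ := mul_le_mul_of_nonneg_left h1 hγS0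
    _ ≤ ‖S (T x)‖ := key (T x)
    _ = ‖(S.comp T) x‖ := rfl


end BlockToeplitz
end
end
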